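/- Let φ: R^n → R^m be a coordinate substitution (φ(e_i) = c_i e_{α(i)} with c_i > 0 for a map α: [n] → [m]), let D ⊆ R^m be a polyhedral cone, and let C = R^n_{≥0} ∩ φ^{-1}(D) with φ(C) = D. Then every extreme ray of C maps under φ onto an extreme ray of D. -/

import Mathlib

/-- `v` spans an extreme ray of the cone `P`. -/
def IsExtremeRay {α : Type*} (P : Set (α → ℝ)) (v : α → ℝ) : Prop :=
  v ∈ P ∧ v ≠ 0 ∧ ∀ x ∈ P, ∀ y ∈ P, x + y = v →
    (∃ a : ℝ, 0 ≤ a ∧ x = a • v) ∧ (∃ b : ℝ, 0 ≤ b ∧ y = b • v)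

/-- Coordinate substitution lemma: let `φ : ℝ^n → ℝ^m` be a coordinate substitution
(`φ(e_i) = c_i e_{α(i)}`, `c_i > 0`), `D ⊆ ℝ^m` a polyhedral cone, and
`C = ℝ^n_{≥0} ∩ φ⁻¹(D)` with `φ(C) = D`. Then every extreme ray of `C` maps under `φ`
onto an extreme ray of `D`. -/
theorem stmt11 (n m : ℕ) (α : Fin n → Fin m) (c : Fin n → ℝ) (hc : ∀ i, 0 < c i)
    (ι : Type*) [Fintype ι] (f : ι → (Fin m → ℝ) →ₗ[ℝ] ℝ)
    (D : Set (Fin m → ℝ)) (hD : D = {y | ∀ i, 0 ≤ f i y})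
    (φ : (Fin n → ℝ) → (Fin m → ℝ))
    (hφ : ∀ x j, φ x j = ∑ i ∈ Finset.univ.filter (fun i => α i = j), c i * x i)
    (C : Set (Fin n → ℝ))
    (hC : C = {x | ∀ i, 0 ≤ x i} ∩ φ ⁻¹' D)
    (himg : φ '' C = D) :
    ∀ v, IsExtremeRay C v → IsExtremeRay D (φ v) := by
  intro v hv
  obtain ⟨hvC, hvne, hvext⟩ := hv
  have hCnn : ∀ x ∈ C, ∀ i, 0 ≤ x i := by
    intro x hx i; rw [hC] at hx; exact hx.1 i
  have hφnn : ∀ x : Fin n → ℝ, (∀ i, 0 ≤ x i) → ∀ j, 0 ≤ φ x j := by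
    intro x hx j; rw [hφ]
    exact Finset.sum_nonneg fun i _ => mul_nonneg (hc i).le (hx i)
  have hDnn : ∀ y ∈ D, ∀ j, 0 ≤ y j := by
    intro y hy j
    rw [← himg] at hy
    obtain ⟨x, hx, rfl⟩ := hy
    exact hφnn x (hCnn x hx) j
  have hvnn := hCnn v hvC
  have hvD : φ v ∈ D := by rw [← himg]; exact ⟨v, hvC, rfl⟩
  have hsmul : ∀ (a : ℝ) (w : Fin n → ℝ), φ (a • w) = a • φ w := by
    intro a w
    funext j
    rw [hφ]
    simp only [Pi.smul_apply, smul_eq_mul, hφ, Finset.mul_sum]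
    exact Finset.sum_congr rfl fun i _ => by ring
  have hkey : ∀ i, 0 < v i → 0 < φ v (α i) := by
    intro i hi
    rw [hφ]
    have h1 : c i * v i ≤ ∑ i' ∈ Finset.univ.filter (fun i' => α i' = α i), c i' * v i' :=
      Finset.single_le_sum (fun i' _ => mul_nonneg (hc i').le (hvnn i')) (by simp)
    exact lt_of_lt_of_le (mul_pos (hc i) hi) h1
  have hzero : ∀ i, φ v (α i) = 0 → v i = 0 := by
    intro i h
    by_contra hne
    have := hkey i ((hvnn i).lt_of_ne (Ne.symm hne))
    linarith
  refine ⟨hvD, ?_, ?_⟩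
  · intro h0
    obtain ⟨i, hi⟩ : ∃ i, v i ≠ 0 := by
      by_contra h; push_neg at h; exact hvne (funext h)
    have := hkey i ((hvnn i).lt_of_ne (Ne.symm hi))
    rw [h0] at this
    simp at this
  · intro x hx y hy hxy
    have hxnn := hDnn x hx
    have hynn := hDnn y hy
    have hφvnn := hDnn _ hvD
    set x' : Fin n → ℝ := fun i => v i * x (α i) / φ v (α i) with hx'def
    set y' : Fin n → ℝ := fun i => v i * y (α i) / φ v (α i) with hy'def
    have hx'nn : ∀ i, 0 ≤ x' i := fun i =>
      div_nonneg (mul_nonneg (hvnn i) (hxnn _)) (hφvnn _)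
    have hy'nn : ∀ i, 0 ≤ y' i := fun i =>
      div_nonneg (mul_nonneg (hvnn i) (hynn _)) (hφvnn _)
    have hgen : ∀ z : Fin m → ℝ, (∀ j, φ v j = 0 → z j = 0) →
        φ (fun i => v i * z (α i) / φ v (α i)) = z := by
      intro z hz0
      funext j
      rw [hφ]
      have hterm : ∀ i ∈ Finset.univ.filter (fun i => α i = j),
          c i * (v i * z (α i) / φ v (α i)) = (c i * v i) * (z j / φ v j) := by
        intro i hi
        simp only [Finset.mem_filter] at hi
        rw [hi.2]; ring
      rw [Finset.sum_congr rfl hterm, ← Finset.sum_mul, ← hφ]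
      by_cases h : φ v j = 0
      · rw [h, hz0 j h]; ring
      · rw [mul_div_cancel₀ _ h]
    have hx0 : ∀ j, φ v j = 0 → x j = 0 := by
      intro j h
      have := congrFun hxy j
      simp only [Pi.add_apply] at this
      nlinarith [hxnn j, hynn j]
    have hy0 : ∀ j, φ v j = 0 → y j = 0 := by
      intro j h
      have := congrFun hxy j
      simp only [Pi.add_apply] at this
      nlinarith [hxnn j, hynn j]
    have hφx' : φ x' = x := hgen x hx0
    have hφy' : φ y' = y := hgen y hy0
    have hx'C : x' ∈ C := by
      rw [hC]
      exact ⟨hx'nn, by simp only [Set.mem_preimage, hφx']; exact hx⟩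
    have hy'C : y' ∈ C := by
      rw [hC]
      exact ⟨hy'nn, by simp only [Set.mem_preimage, hφy']; exact hy⟩
    have hsum : x' + y' = v := by
      funext i
      simp only [Pi.add_apply, hx'def, hy'def]
      by_cases h : v i = 0
      · rw [h]; simp
      · have hpos : 0 < φ v (α i) := hkey i ((hvnn i).lt_of_ne (Ne.symm h))
        have hxyj := congrFun hxy (α i)
        simp only [Pi.add_apply] at hxyj
        rw [← add_div, ← mul_add, hxyj, mul_div_assoc, div_self hpos.ne', mul_one]
    obtain ⟨⟨a, ha, hax⟩, ⟨b, hb, hby⟩⟩ := hvext x' hx'C y' hy'C hsum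
    refine ⟨⟨a, ha, ?_⟩, ⟨b, hb, ?_⟩⟩
    · rw [← hφx', hax, hsmul]
    · rw [← hφy', hby, hsmul]
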